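/- arXiv:2109.05001 — 3 statements merged into one kernel-verified Lean document; each statement's English description precedes it below -/
import Mathlib

section
/- Let $M_j = 2^j$ and let $(r_j)_{j\ge 1}$ be a sequence of positive reals with $c_1 = 1$ and $c_j = \prod_{k=2}^{j} r_{k-1}^{M_{k-1}-M_k}$ for $j \ge 2$. If $k \ge 3$ and $\sqrt{r_k} \ge r_j$ for all $1 \le j < k$, then $r_k^{M_k} \cdot c_k \ge r_k^{M_{k-1}+1}$. -/
theorem stmt_0 (r : ℕ → ℝ) (hr : ∀ j, 1 ≤ j → 0 < r j) (k : ℕ) (hk : 3 ≤ k)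
    (hsqrt : ∀ j, 1 ≤ j → j < k → Real.sqrt (r k) ≥ r j) :
    r k ^ (2 ^ k) * (∏ j ∈ Finset.Icc 2 k, (r (j - 1)) ^ (-((2 : ℤ) ^ (j - 1)))) ≥
      r k ^ (2 ^ (k - 1) + 1) := by
  have hrk : 0 < r k := hr k (by omega)
  set s := Real.sqrt (r k) with hs
  have hs0 : 0 < s := Real.sqrt_pos.mpr hrk
  have hss : s * s = r k := Real.mul_self_sqrt hrk.le
  -- product formula for powers of s
  have key : ∀ m, 2 ≤ m →
      ∏ j ∈ Finset.Icc 2 m, s ^ (-((2 : ℤ) ^ (j - 1))) = s ^ (-((2 : ℤ) ^ m - 2)) := by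
    intro m hm
    induction m with
    | zero => omega
    | succ n ih =>
      rcases Nat.lt_or_ge n 2 with h | h
      · have hn : n = 1 := by omega
        subst hn
        norm_num [Finset.Icc_self]
      · rw [Finset.prod_Icc_succ_top (by omega), ih h, ← zpow_add₀ hs0.ne']
        congr 1
        have : n + 1 - 1 = n := by omega
        rw [this, pow_succ]
        ring
  -- pointwise inequality
  have hfac : ∀ j ∈ Finset.Icc 2 k,
      s ^ (-((2 : ℤ) ^ (j - 1))) ≤ (r (j - 1)) ^ (-((2 : ℤ) ^ (j - 1))) := by
    intro j hj
    simp only [Finset.mem_Icc] at hj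
    have h1 : 1 ≤ j - 1 := by omega
    have h2 : j - 1 < k := by omega
    have hrj : 0 < r (j - 1) := hr _ h1
    have hle : r (j - 1) ≤ s := hsqrt _ h1 h2
    have hcast : ((2 : ℤ) ^ (j - 1)) = ((2 ^ (j - 1) : ℕ) : ℤ) := by push_cast; ring
    rw [hcast, zpow_neg, zpow_neg, zpow_natCast, zpow_natCast]
    exact inv_anti₀ (pow_pos hrj _) (pow_le_pow_left₀ hrj.le hle _)
  have hprod : ∏ j ∈ Finset.Icc 2 k, s ^ (-((2 : ℤ) ^ (j - 1))) ≤
      ∏ j ∈ Finset.Icc 2 k, (r (j - 1)) ^ (-((2 : ℤ) ^ (j - 1))) :=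
    Finset.prod_le_prod (fun j _ => (zpow_pos hs0 _).le) hfac
  rw [key k (by omega)] at hprod
  have hpow0 : (0 : ℝ) ≤ r k ^ (2 ^ k) := by positivity
  have hmul : r k ^ (2 ^ k) * s ^ (-((2 : ℤ) ^ k - 2)) ≤
      r k ^ (2 ^ k) * ∏ j ∈ Finset.Icc 2 k, (r (j - 1)) ^ (-((2 : ℤ) ^ (j - 1))) :=
    mul_le_mul_of_nonneg_left hprod hpow0
  refine le_trans (le_of_eq ?_) hmul
  -- compute r k ^ (2^k) * s ^ (-(2^k - 2)) = r k ^ (2^(k-1)+1)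
  obtain ⟨n, rfl⟩ : ∃ n, k = n + 1 := ⟨k - 1, by omega⟩
  have hsq : s ^ (2 : ℤ) = r (n + 1) := by
    rw [zpow_two]; exact hss
  have h1 : s ^ (-((2 : ℤ) ^ (n + 1) - 2)) = (s ^ (2 : ℤ)) ^ (-((2 : ℤ) ^ n - 1)) := by
    rw [← zpow_mul]
    congr 1
    rw [pow_succ]
    ring
  rw [h1, hsq]
  have : n + 1 - 1 = n := by omega
  rw [this]
  rw [← zpow_natCast (r (n + 1)) (2 ^ (n + 1)), ← zpow_natCast (r (n + 1)) (2 ^ n + 1),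
    ← zpow_add₀ hrk.ne']
  congr 1
  push_cast
  rw [pow_succ]
  ring
end

section
/- Define sequences by $M_j = 2^j$, $r_1 = 16$, $c_1 = 1$, $c_j = \prod_{k=2}^{j} r_{k-1}^{-M_{k-1}}$, and $r_{j+1} = c_j (r_j/2)^{M_j}$ for $j \ge 2$ (with $r_2 = c_1 (r_1/2)^{M_1}$). Then $r_2 > r_1$, and for all $k \ge 2$ one has $\sqrt{r_{k+1}} \ge r_k$. In particular $(r_k)$ is strictly increasing. -/
theorem stmt_1 (r : ℕ → ℝ) (h1 : r 1 = 16)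
    (hrec : ∀ j, 1 ≤ j →
      r (j + 1) = (∏ k ∈ Finset.Icc 2 j, (r (k - 1)) ^ (-((2 : ℤ) ^ (k - 1)))) *
        (r j / 2) ^ (2 ^ j)) :
    r 2 > r 1 ∧ (∀ k, 2 ≤ k → Real.sqrt (r (k + 1)) ≥ r k) ∧
      (∀ k, 1 ≤ k → r k < r (k + 1)) := by
  set P : ℕ → ℝ := fun j => ∏ k ∈ Finset.Icc 2 j, (r (k - 1)) ^ (-((2 : ℤ) ^ (k - 1))) with hP
  -- P 1 = 1
  have hP1 : P 1 = 1 := by simp [hP]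
  -- r 2 = 64
  have hr2 : r 2 = 64 := by
    have h := hrec 1 le_rfl
    rw [h, h1, show Finset.Icc 2 1 = (∅ : Finset ℕ) from rfl]
    norm_num
  -- positivity
  have hpos : ∀ j, 1 ≤ j → 0 < r j ∧ 0 < P j := by
    intro j hj
    induction j, hj using Nat.le_induction with
    | base => exact ⟨by rw [h1]; norm_num, by rw [hP1]; norm_num⟩
    | succ n hn ih =>
      have hPsucc : P (n + 1) = P n * (r ((n+1) - 1)) ^ (-((2 : ℤ) ^ ((n+1) - 1))) :=
        Finset.prod_Icc_succ_top (by omega : 2 ≤ n + 1) _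
      simp only [Nat.add_sub_cancel] at hPsucc
      constructor
      · rw [hrec n hn]
        exact mul_pos ih.2 (pow_pos (by linarith [ih.1] : (0:ℝ) < r n / 2) _)
      · rw [hPsucc]
        exact mul_pos ih.2 (zpow_pos ih.1 _)
  -- ratio formula
  have hratio : ∀ j, 1 ≤ j →
      r (j + 2) = r (j + 1) * ((r (j + 1)) ^ 2 / (2 * (r j) ^ 2)) ^ (2 ^ j) := by
    intro j hj
    obtain ⟨hrj, hPj⟩ := hpos j hj
    have hPsucc : P (j + 1) = P j * (r ((j+1) - 1)) ^ (-((2 : ℤ) ^ ((j+1) - 1))) :=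
      Finset.prod_Icc_succ_top (by omega : 2 ≤ j + 1) _
    simp only [Nat.add_sub_cancel] at hPsucc
    have hzpow : (r j) ^ (-((2 : ℤ) ^ j)) = ((r j) ^ (2 ^ j : ℕ))⁻¹ := by
      rw [zpow_neg]
      norm_cast
    have hb : r (j + 1) = P j * (r j / 2) ^ (2 ^ j) := hrec j hj
    have h2 : r (j + 2) = P j * ((r j) ^ (2 ^ j : ℕ))⁻¹ * (r (j + 1) / 2) ^ (2 ^ (j + 1)) := by
      have h' : r ((j + 1) + 1) = P (j + 1) * (r (j + 1) / 2) ^ (2 ^ (j + 1)) :=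
        hrec (j + 1) (by omega)
      rw [hPsucc, hzpow] at h'
      exact h' 
    rw [h2, hb]
    have hane : (r j) ≠ 0 := ne_of_gt hrj
    have hpne : P j ≠ 0 := ne_of_gt hPj
    have hexp : 2 ^ (j + 1) = 2 * 2 ^ j := by ring
    rw [hexp]
    field_simp
    have hinv : r j ^ (2 ^ j * 2) * (r j)⁻¹ ^ (2 ^ j * 2) = 1 := by
      rw [inv_pow]; exact mul_inv_cancel₀ (pow_ne_zero _ hane)
    linear_combination (-(P j ^ (2 ^ j * 2) * r j ^ (2 ^ (j * 2) * 2) * (1 / 2) ^ (2 ^ j * 2) * (1 / 2) ^ (2 ^ (j * 2) * 2))) * hinv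
  -- main induction: r k ≥ 64 and r (k+1) ≥ r k ^ 2 for k ≥ 2
  have hmain : ∀ k, 2 ≤ k → 64 ≤ r k ∧ (r k) ^ 2 ≤ r (k + 1) := by
    intro k hk
    induction k, hk using Nat.le_induction with
    | base =>
      refine ⟨by rw [hr2], ?_⟩
      have h3 := hratio 1 le_rfl
      rw [hr2, h1] at h3
      rw [hr2, h3]; norm_num
    | succ n hn ih =>
      obtain ⟨h64, hsq⟩ := ih
      have hb64 : (64:ℝ) ≤ r (n + 1) := by nlinarith
      refine ⟨hb64, ?_⟩
      have hr := hratio n (by omega)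
      have hrnpos : 0 < r n := (hpos n (by omega)).1
      have hbpos : 0 < r (n + 1) := by linarith
      set b := r (n + 1)
      -- base ≥ b/2
      have hbase : b / 2 ≤ b ^ 2 / (2 * (r n) ^ 2) := by
        rw [div_le_div_iff₀ (by norm_num) (by positivity)]
        nlinarith
      have h1le : (1:ℝ) ≤ b / 2 := by linarith
      have hn2 : 2 ≤ 2 ^ n := by
        calc 2 = 2 ^ 1 := rfl
        _ ≤ 2 ^ n := Nat.pow_le_pow_right (by norm_num) (by omega)
      have hstep1 : (b / 2) ^ 2 ≤ (b / 2) ^ (2 ^ n) :=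
        pow_le_pow_right₀ h1le hn2
      have hstep2 : (b / 2) ^ (2 ^ n) ≤ (b ^ 2 / (2 * (r n) ^ 2)) ^ (2 ^ n) :=
        pow_le_pow_left₀ (by linarith) hbase _
      have hge : b ≤ (b ^ 2 / (2 * (r n) ^ 2)) ^ (2 ^ n) := by
        have : b ≤ (b / 2) ^ 2 := by nlinarith
        linarith
      rw [hr]
      calc b ^ 2 = b * b := sq b
      _ ≤ b * (b ^ 2 / (2 * (r n) ^ 2)) ^ (2 ^ n) := by
          exact mul_le_mul_of_nonneg_left hge (le_of_lt hbpos)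
  refine ⟨by rw [hr2, h1]; norm_num, ?_, ?_⟩
  · intro k hk
    obtain ⟨h64, hsq⟩ := hmain k hk
    have hx : (0:ℝ) ≤ r k := by linarith
    exact (Real.le_sqrt (y := r (k + 1)) hx (le_trans (sq_nonneg _) hsq)).2 hsq
  · intro k hk
    rcases eq_or_lt_of_le hk with h | h
    · rw [← h, h1, hr2]; norm_num
    · obtain ⟨h64, hsq⟩ := hmain k (by omega)
      nlinarith
end

section
/- Let $g$ be holomorphic on the closed annulus $\overline{A(a,b)} = \{z : a \le |z| \le b\}$ with $0 < a < b$, and let $0 < c < d$. If $|g(z)| \le c$ for all $|z| = a$ and $|g(z)| \ge d$ for all $|z| = b$, then the open annulus $A(c,d) = \{w : c < |w| < d\}$ is contained in $g(A(a,b))$. -/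
open Set Filter Topology

lemma annulus_eq (a b : ℝ) (ha : 0 ≤ a) :
    {z : ℂ | a < ‖z‖ ∧ ‖z‖ < b} =
      (fun p : ℝ × ℂ => p.1 • p.2) '' (Ioo a b ×ˢ Metric.sphere (0:ℂ) 1) := by
  ext z
  constructor
  · rintro ⟨h1, h2⟩
    have hz : z ≠ 0 := by
      intro h; simp [h] at h1; linarith
    refine ⟨(‖z‖, ‖z‖⁻¹ • z), ⟨⟨h1, h2⟩, ?_⟩, ?_⟩
    · simp [norm_smul, abs_of_nonneg (norm_nonneg z),
        inv_mul_cancel₀ (norm_ne_zero_iff.mpr hz)]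
    · simp only [smul_smul]
      rw [mul_inv_cancel₀ (norm_ne_zero_iff.mpr hz), one_smul]
  · rintro ⟨⟨r, u⟩, ⟨⟨hr1, hr2⟩, hu⟩, rfl⟩
    have hu' : ‖u‖ = 1 := by simpa using hu
    have : ‖r • u‖ = r := by
      simp [norm_smul, hu', abs_of_nonneg (le_of_lt (lt_of_le_of_lt ha hr1))]
    exact ⟨by rw [this]; exact hr1, by rw [this]; exact hr2⟩

lemma annulus_preconnected (a b : ℝ) (ha : 0 ≤ a) :
    IsPreconnected {z : ℂ | a < ‖z‖ ∧ ‖z‖ < b} := by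
  rw [annulus_eq a b ha]
  apply IsPreconnected.image
  · exact (isPreconnected_Ioo.prod (isPreconnected_sphere (by
      rw [Complex.rank_real_complex]; norm_num) 0 1))
  · exact ((continuous_fst.smul continuous_snd).continuousOn)

theorem stmt_7 (g : ℂ → ℂ) (a b c d : ℝ) (ha : 0 < a) (hab : a < b) (hc : 0 < c) (hcd : c < d)
    (hcont : ContinuousOn g {z : ℂ | a ≤ ‖z‖ ∧ ‖z‖ ≤ b})
    (hdiff : DifferentiableOn ℂ g {z : ℂ | a < ‖z‖ ∧ ‖z‖ < b})
    (hinner : ∀ z : ℂ, ‖z‖ = a → ‖g z‖ ≤ c)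
    (houter : ∀ z : ℂ, ‖z‖ = b → ‖g z‖ ≥ d) :
    {w : ℂ | c < ‖w‖ ∧ ‖w‖ < d} ⊆
      g '' {z : ℂ | a < ‖z‖ ∧ ‖z‖ < b} := by
  set S : Set ℂ := {z : ℂ | a ≤ ‖z‖ ∧ ‖z‖ ≤ b} with hS
  set A : Set ℂ := {z : ℂ | a < ‖z‖ ∧ ‖z‖ < b} with hA
  set W : Set ℂ := {w : ℂ | c < ‖w‖ ∧ ‖w‖ < d} with hW
  have hAS : A ⊆ S := fun z hz => ⟨hz.1.le, hz.2.le⟩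
  have hAopen : IsOpen A := by
    have : A = (fun z : ℂ => ‖z‖) ⁻¹' Ioo a b := rfl
    rw [this]; exact isOpen_Ioo.preimage continuous_norm
  have hSclosed : IsClosed S := by
    have : S = (fun z : ℂ => ‖z‖) ⁻¹' Icc a b := rfl
    rw [this]; exact isClosed_Icc.preimage continuous_norm
  have hScompact : IsCompact S := by
    apply Metric.isCompact_of_isClosed_isBounded hSclosed
    apply Bornology.IsBounded.subset (Metric.isBounded_closedBall (x := (0:ℂ)) (r := b))
    intro z hz
    simpa [Metric.mem_closedBall, Complex.dist_eq] using hz.2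
  -- absolute value on the real segment
  have hreal : ∀ r : ℝ, a ≤ r → r ≤ b → (r : ℂ) ∈ S := by
    intro r h1 h2
    constructor <;> simp [Complex.norm_real, abs_of_nonneg (le_trans ha.le h1)] <;> assumption
  have hrealA : ∀ r : ℝ, a < r → r < b → (r : ℂ) ∈ A := by
    intro r h1 h2
    constructor <;> simp [Complex.norm_real, abs_of_nonneg (le_trans ha.le h1.le)] <;> assumption
  -- g is not constant on A
  have hnotconst : ¬ ∃ w, ∀ z ∈ A, g z = w := by
    rintro ⟨w, hw⟩
    -- limit at the inner boundary point (a : ℂ)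
    have haS : (a : ℂ) ∈ S := hreal a le_rfl hab.le
    have hca : ContinuousWithinAt g S (a : ℂ) := hcont _ haS
    have htend : Tendsto (fun t : ℝ => g t) (𝓝[>] a) (𝓝 (g a)) := by
      apply hca.tendsto.comp
      rw [tendsto_nhdsWithin_iff]
      constructor
      · apply Tendsto.mono_left (Continuous.tendsto Complex.continuous_ofReal a)
        exact nhdsWithin_le_nhds
      · filter_upwards [Ioo_mem_nhdsGT_of_mem (left_mem_Ico.mpr hab)] with t ht
        exact hreal t ht.1.le ht.2.le
    have heq : ∀ᶠ t : ℝ in 𝓝[>] a, g ↑t = w := by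
      filter_upwards [Ioo_mem_nhdsGT_of_mem (left_mem_Ico.mpr hab)] with t ht
      exact hw _ (hrealA t ht.1 ht.2)
    have hga : g a = w :=
      tendsto_nhds_unique (htend.congr' heq) tendsto_const_nhds
    -- limit at the outer boundary point (b : ℂ)
    have hbS : (b : ℂ) ∈ S := hreal b hab.le le_rfl
    have hcb : ContinuousWithinAt g S (b : ℂ) := hcont _ hbS
    have htendb : Tendsto (fun t : ℝ => g t) (𝓝[<] b) (𝓝 (g b)) := by
      apply hcb.tendsto.comp
      rw [tendsto_nhdsWithin_iff]
      constructor
      · apply Tendsto.mono_left (Continuous.tendsto Complex.continuous_ofReal b)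
        exact nhdsWithin_le_nhds
      · filter_upwards [Ioo_mem_nhdsLT_of_mem (right_mem_Ioc.mpr hab)] with t ht
        exact hreal t ht.1.le ht.2.le
    have heqb : ∀ᶠ t : ℝ in 𝓝[<] b, g ↑t = w := by
      filter_upwards [Ioo_mem_nhdsLT_of_mem (right_mem_Ioc.mpr hab)] with t ht
      exact hw _ (hrealA t ht.1 ht.2)
    have hgb : g b = w :=
      tendsto_nhds_unique (htendb.congr' heqb) tendsto_const_nhds
    have h1 : ‖w‖ ≤ c := by
      rw [← hga]; exact hinner _ (by simp [Complex.norm_real, abs_of_nonneg ha.le])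
    have h2 : ‖w‖ ≥ d := by
      rw [← hgb]; exact houter _ (by simp [Complex.norm_real, abs_of_nonneg (ha.trans hab).le])
    linarith
  -- open mapping
  have hanal : AnalyticOnNhd ℂ g A := hdiff.analyticOnNhd hAopen
  have hAconn : IsPreconnected A := annulus_preconnected a b ha.le
  have huopen : IsOpen (g '' A) := by
    rcases hanal.is_constant_or_isOpen hAconn with h | h
    · exact absurd h hnotconst
    · exact h A subset_rfl hAopen
  -- the complement of the compact image of S
  have hgScompact : IsCompact (g '' S) := hScompact.image_of_continuousOn hcont
  have hvopen : IsOpen (g '' S)ᶜ := hgScompact.isClosed.isOpen_compl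
  -- W is covered
  have hcover : W ⊆ g '' A ∪ (g '' S)ᶜ := by
    intro w hw
    by_cases hws : w ∈ g '' S
    · left
      obtain ⟨z, hz, rfl⟩ := hws
      rcases eq_or_lt_of_le hz.1 with h1 | h1
      · exact absurd (hinner z h1.symm) (not_le.mpr hw.1)
      rcases eq_or_lt_of_le hz.2 with h2 | h2
      · exact absurd (houter z h2) (not_le.mpr hw.2)
      exact ⟨z, ⟨h1, h2⟩, rfl⟩
    · right; exact hws
  have hdisj : Disjoint (g '' A) (g '' S)ᶜ := by
    rw [Set.disjoint_compl_right_iff_subset]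
    exact image_mono hAS
  -- nonemptiness via intermediate value theorem
  have hne : (W ∩ g '' A).Nonempty := by
    have hcont' : ContinuousOn (fun t : ℝ => ‖g t‖) (Icc a b) := by
      apply continuous_norm.comp_continuousOn
      apply hcont.comp Complex.continuous_ofReal.continuousOn
      intro t ht; exact hreal t ht.1 ht.2
    have hmem : (c + d) / 2 ∈ Icc (‖g a‖) (‖g b‖) := by
      have h1 : ‖g a‖ ≤ c :=
        hinner _ (by simp [Complex.norm_real, abs_of_nonneg ha.le])
      have h2 : d ≤ ‖g b‖ :=
        houter _ (by simp [Complex.norm_real, abs_of_nonneg (ha.trans hab).le])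
      constructor <;> [linarith; linarith]
    obtain ⟨r, hr, hr2'⟩ := intermediate_value_Icc hab.le hcont' hmem
    have hr2 : ‖g ↑r‖ = (c + d) / 2 := hr2'
    have hra : a < r := by
      rcases eq_or_lt_of_le hr.1 with h | h
      · exfalso
        have : ‖g a‖ ≤ c :=
          hinner _ (by simp [Complex.norm_real, abs_of_nonneg ha.le])
        rw [← h] at hr2; rw [hr2] at this; linarith
      · exact h
    have hrb : r < b := by
      rcases eq_or_lt_of_le hr.2 with h | h
      · exfalso
        have : d ≤ ‖g b‖ :=
          houter _ (by simp [Complex.norm_real, abs_of_nonneg (ha.trans hab).le])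
        rw [h] at hr2; rw [hr2] at this; linarith
      · exact h
    refine ⟨g r, ⟨by rw [hr2]; linarith, by rw [hr2]; linarith⟩, ⟨r, hrealA r hra hrb, rfl⟩⟩
  -- W is preconnected
  have hWconn : IsPreconnected W := annulus_preconnected c d hc.le
  have := hWconn.subset_left_of_subset_union huopen hvopen hdisj hcover hne
  exact this
end
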